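/- For all positive integers n and k, the total number of occurrences of k among all partitions of n equals the sum of P(i) over all integers i with 0 ≤ i ≤ n-1 and i ≡ n (mod k); that is, Q_k(n) = Σ_{0 ≤ i < n, i ≡ n mod k} P(i), where P(0) = 1. -/
import Mathlib


/-- Number of unordered partitions of `n` (so `P 0 = 1`, via the empty partition). -/
def P (n : ℕ) : ℕ := Fintype.card (Nat.Partition n)

/-- Total number of occurrences of `k`, counted with multiplicity,
among all unordered partitions of `n` (so `Q k 0 = 0`). -/
def Q (k n : ℕ) : ℕ := ∑ p : Nat.Partition n, p.parts.count k

/-- Sum over all unordered partitions of `n` of the number of distinct parts. -/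
def S (n : ℕ) : ℕ := ∑ p : Nat.Partition n, p.parts.toFinset.card

/-- Number of unordered partitions of `n` containing `k` as a part. -/
def R (k n : ℕ) : ℕ := (Finset.univ.filter (fun p : Nat.Partition n => k ∈ p.parts)).card

lemma Q_small (k n : ℕ) (h : n < k) : Q k n = 0 := by
  unfold Q
  apply Finset.sum_eq_zero
  intro p _
  rw [Multiset.count_eq_zero]
  intro hm
  have := p.parts_sum
  have hle : k ≤ p.parts.sum := Multiset.le_sum_of_mem hm
  omega

lemma Q_rec (k n : ℕ) (hk : 0 < k) (hkn : k ≤ n) : Q k n = P (n-k) + Q k (n-k) := by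
  classical
  have step : Q k n = ∑ p ∈ Finset.univ.filter (fun p : Nat.Partition n => k ∈ p.parts),
      p.parts.count k := by
    unfold Q
    rw [Finset.sum_filter]
    apply Finset.sum_congr rfl
    intro p _
    by_cases h : k ∈ p.parts
    · simp [h]
    · simp [Multiset.count_eq_zero_of_notMem h]
  rw [step]
  have key : ∑ p ∈ Finset.univ.filter (fun p : Nat.Partition n => k ∈ p.parts),
      p.parts.count k = ∑ q ∈ (Finset.univ : Finset (Nat.Partition (n - k))),
      (q.parts.count k + 1) := by
    refine Finset.sum_bij'
      (fun p hp => (⟨p.parts.erase k,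
        by intro i hi; exact p.parts_pos (Multiset.mem_of_mem_erase hi),
        by
          have hp' : k ∈ p.parts := by simpa using hp
          have h1 : k + (p.parts.erase k).sum = p.parts.sum := by
            rw [← Multiset.sum_cons, Multiset.cons_erase hp']
          have := p.parts_sum
          omega⟩ : Nat.Partition (n - k)))
      (fun q _ => (⟨k ::ₘ q.parts,
        by
          intro i hi
          rcases Multiset.mem_cons.mp hi with h | h
          · omega
          · exact q.parts_pos h,
        by
          rw [Multiset.sum_cons, q.parts_sum]; omega⟩ : Nat.Partition n))
      ?_ ?_ ?_ ?_ ?_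
    · intro p hp; exact Finset.mem_univ _
    · intro q hq
      simp only [Finset.mem_filter, Finset.mem_univ, true_and]
      exact Multiset.mem_cons_self _ _
    · intro p hp
      have hp' : k ∈ p.parts := by simpa using hp
      apply Nat.Partition.ext
      simp [Multiset.cons_erase hp']
    · intro q hq
      apply Nat.Partition.ext
      simp
    · intro p hp
      have hp' : k ∈ p.parts := by simpa using hp
      simp only [Multiset.count_erase_self]
      have : 0 < p.parts.count k := Multiset.count_pos.mpr hp'
      omega
  rw [key, Finset.sum_add_distrib]
  simp only [Finset.sum_const, Finset.card_univ, smul_eq_mul, mul_one]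
  unfold Q P Fintype.card
  omega

theorem Q_eq_sum_P_congruent' (k : ℕ) (hk : 0 < k) :
    ∀ n, Q k n = ∑ i ∈ (Finset.range n).filter (fun i => i % k = n % k), P i := by
  intro n
  induction n using Nat.strong_induction_on with
  | _ n ih =>
    rcases lt_or_ge n k with h | h
    · rw [Q_small k n h]
      rw [Finset.sum_filter]
      symm
      apply Finset.sum_eq_zero
      intro i hi
      have hi' : i < n := Finset.mem_range.mp hi
      have e1 : i % k = i := Nat.mod_eq_of_lt (lt_trans hi' h)
      have e2 : n % k = n := Nat.mod_eq_of_lt h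
      rw [if_neg]
      omega
    · have hnk : n - k < n := by omega
      rw [Q_rec k n hk h, ih (n - k) hnk]
      have hmod : (n - k) % k = n % k := by
        conv_rhs => rw [show n = (n - k) + k by omega]
        rw [Nat.add_mod_right]
      have hset : (Finset.range n).filter (fun i => i % k = n % k)
          = insert (n - k) ((Finset.range (n - k)).filter (fun i => i % k = (n - k) % k)) := by
        ext i
        simp only [Finset.mem_insert, Finset.mem_filter, Finset.mem_range, hmod]
        constructor
        · rintro ⟨hin, hm⟩
          rcases lt_or_ge i (n - k) with h1 | h1
          · exact Or.inr ⟨h1, hm⟩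
          · left
            have hle : i ≤ n := le_of_lt hin
            have hdvd : k ∣ (n - i) := (Nat.modEq_iff_dvd' hle).mp hm
            rcases hdvd with ⟨c, hc⟩
            rcases Nat.eq_zero_or_pos c with rfl | hc'
            · omega
            · have : k ≤ n - i := by
                calc k = k * 1 := by ring
                _ ≤ k * c := Nat.mul_le_mul_left k hc'
                _ = n - i := hc.symm
              omega
        · rintro (rfl | ⟨h1, h2⟩)
          · exact ⟨hnk, hmod⟩
          · exact ⟨by omega, h2⟩
      rw [hset, Finset.sum_insert (by simp)]

theorem Q_eq_sum_P_congruent (n k : ℕ) (hn : 0 < n) (hk : 0 < k) :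
    Q k n = ∑ i ∈ (Finset.range n).filter (fun i => i % k = n % k), P i :=
  Q_eq_sum_P_congruent' k hk n
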